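/- arXiv:math/0407515 — 2 statements merged into one kernel-verified Lean document; each statement's English description precedes it below -/
import Mathlib

section
/- The p groups M_λ = G(A_λ ⊆ B), λ = 0,…,p−1, are pairwise nonisomorphic. Hence the number of isomorphism classes of metabelian groups of order p^{22} is at least p. -/
namespace Metabelian

variable {B : Type*} [AddCommGroup B]

/-- The subgroup `A` of `B` is bounded by `n`, i.e. `n • a = 0` for all `a ∈ A`. -/
class BoundedSub (A : AddSubgroup B) (n : ℕ) : Prop where
  bound : ∀ a : A, n • (a : B) = 0

lemma val_smul_eq {n : ℕ} (a : B) (h : n • a = 0) (x : ℕ) : (x % n) • a = x • a := by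
  conv_rhs => rw [← Nat.mod_add_div x n]
  rw [add_nsmul, mul_nsmul, h, smul_zero, add_zero]

/-- Birkhoff's construction `G(A ⊆ B) = (A ⊕ B) ⋊_ψ D` with `D = ℤ/n` where `n` bounds `A`:
the underlying set is `A × B × ℤ/n` and the (multiplicatively written) group operation is
`(a,b,d)·(a',b',d') = (a+a', b + d·ι(a') + b', d+d')`. -/
instance mgroup (A : AddSubgroup B) (n : ℕ) [NeZero n] [BoundedSub A n] :
    Group (A × B × ZMod n) where
  mul x y := (x.1 + y.1, x.2.1 + x.2.2.val • (y.1 : B) + y.2.1, x.2.2 + y.2.2)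
  one := (0, 0, 0)
  inv x := (-x.1, -x.2.1 + x.2.2.val • (x.1 : B), -x.2.2)
  mul_assoc x y z := by
    have hb := BoundedSub.bound (A := A) (n := n)
    refine Prod.ext (add_assoc _ _ _) (Prod.ext ?_ (add_assoc _ _ _))
    show x.2.1 + x.2.2.val • (y.1 : B) + y.2.1 + (x.2.2 + y.2.2).val • (z.1 : B) + z.2.1
        = x.2.1 + x.2.2.val • ((y.1 + z.1 : A) : B) + (y.2.1 + y.2.2.val • (z.1 : B) + z.2.1)
    rw [ZMod.val_add, val_smul_eq _ (hb z.1), AddSubgroup.coe_add, smul_add, add_nsmul]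
    abel
  one_mul x := by
    refine Prod.ext (zero_add _) (Prod.ext ?_ (zero_add _))
    show (0 : B) + (0 : ZMod n).val • (x.1 : B) + x.2.1 = x.2.1
    simp
  mul_one x := by
    refine Prod.ext (add_zero _) (Prod.ext ?_ (add_zero _))
    show x.2.1 + x.2.2.val • ((0 : A) : B) + 0 = x.2.1
    simp
  inv_mul_cancel x := by
    have hb := BoundedSub.bound (A := A) (n := n)
    refine Prod.ext (neg_add_cancel _) (Prod.ext ?_ (neg_add_cancel _))
    show -x.2.1 + x.2.2.val • (x.1 : B) + (-x.2.2).val • (x.1 : B) + x.2.1 = 0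
    have h2 : ((-x.2.2).val + x.2.2.val) % n = 0 := by
      rw [← ZMod.val_add, neg_add_cancel, ZMod.val_zero]
    have h3 : x.2.2.val • (x.1 : B) + (-x.2.2).val • (x.1 : B) = 0 := by
      rw [add_comm, ← add_nsmul, ← val_smul_eq _ (hb x.1), h2, zero_nsmul]
    rw [add_assoc, add_assoc, ← add_assoc (x.2.2.val • (x.1 : B)), h3, zero_add, neg_add_cancel]

/-! Birkhoff's example: `B = ℤ/p⁶ ⊕ ℤ/p⁴ ⊕ ℤ/p²` with generators `x, y, z`, and
`A_λ = ⟨p²x + py + z, p²y + pλz⟩`. -/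

/-- `B = ℤ/p⁶ ⊕ ℤ/p⁴ ⊕ ℤ/p²`. -/
abbrev Bb (p : ℕ) := ZMod (p ^ 6) × ZMod (p ^ 4) × ZMod (p ^ 2)

def xgen (p : ℕ) : Bb p := (1, 0, 0)
def ygen (p : ℕ) : Bb p := (0, 1, 0)
def zgen (p : ℕ) : Bb p := (0, 0, 1)

/-- `u = p²x + py + z`. -/
def ugen (p : ℕ) : Bb p := p ^ 2 • xgen p + p • ygen p + zgen p

/-- `v_λ = p²y + pλz`. -/
def vgen (p l : ℕ) : Bb p := p ^ 2 • ygen p + (p * l) • zgen p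

/-- `A_λ = ⟨u, v_λ⟩`. -/
def Asub (p l : ℕ) : AddSubgroup (Bb p) := AddSubgroup.closure {ugen p, vgen p l}

lemma ppow_zero (p n k : ℕ) (h : n ≤ k) : ((p : ZMod (p ^ n))) ^ k = 0 := by
  have h0 : ((p : ZMod (p ^ n))) ^ n = 0 := by rw [← Nat.cast_pow, ZMod.natCast_self]
  calc ((p : ZMod (p ^ n))) ^ k = (p : ZMod (p ^ n)) ^ n * (p : ZMod (p ^ n)) ^ (k - n) := by
        rw [← pow_add, Nat.add_sub_cancel' h]
    _ = 0 := by rw [h0, zero_mul]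

instance Asub_bounded (p l : ℕ) [Fact p.Prime] : BoundedSub (Asub p l) (p ^ 4) := by
  constructor
  rintro ⟨a, ha⟩
  simp only
  induction ha using AddSubgroup.closure_induction with
  | mem b hb =>
    rcases hb with rfl | rfl
    · show p ^ 4 • ugen p = 0
      simp only [ugen, xgen, ygen, zgen, smul_add, smul_smul, Prod.smul_mk, Prod.mk_add_mk,
        smul_zero, nsmul_eq_mul, Nat.cast_pow, mul_one, add_zero, zero_add, mul_zero]
      refine Prod.ext ?_ (Prod.ext ?_ ?_)
      · show (p : ZMod (p ^ 6)) ^ 4 * (p : ZMod (p ^ 6)) ^ 2 = 0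
        rw [← pow_add]; exact ppow_zero p 6 6 le_rfl
      · show (p : ZMod (p ^ 4)) ^ 4 * (p : ZMod (p ^ 4)) = 0
        rw [← pow_succ]; exact ppow_zero p 4 5 (by norm_num)
      · show (p : ZMod (p ^ 2)) ^ 4 = 0
        exact ppow_zero p 2 4 (by norm_num)
    · show p ^ 4 • vgen p l = 0
      simp only [vgen, ygen, zgen, smul_add, smul_smul, Prod.smul_mk, Prod.mk_add_mk,
        smul_zero, nsmul_eq_mul, Nat.cast_pow, Nat.cast_mul, mul_one, add_zero, zero_add,
        mul_zero]
      refine Prod.ext ?_ (Prod.ext ?_ ?_)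
      · show (0 : ZMod (p ^ 6)) = 0
        rfl
      · show (p : ZMod (p ^ 4)) ^ 4 * (p : ZMod (p ^ 4)) ^ 2 = 0
        rw [← pow_add]; exact ppow_zero p 4 6 (by norm_num)
      · show (p : ZMod (p ^ 2)) ^ 4 * ((p : ZMod (p ^ 2)) * l) = 0
        rw [ppow_zero p 2 4 (by norm_num), zero_mul]
  | zero => simp
  | add x y hx hy hx' hy' => simp [smul_add, hx', hy']
  | neg x hx hx' => simp [hx']


/-! ### Component descriptions of the generators -/

lemma ugen_def' (p : ℕ) :
    ugen p = (((p^2 : ℕ) : ZMod (p^6)), ((p : ℕ) : ZMod (p^4)), (1 : ZMod (p^2))) := by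
  simp [ugen, xgen, ygen, zgen, Prod.ext_iff, nsmul_eq_mul]

lemma vgen_def' (p l : ℕ) :
    vgen p l = ((0 : ZMod (p^6)), ((p^2 : ℕ) : ZMod (p^4)), ((p*l : ℕ) : ZMod (p^2))) := by
  simp [vgen, ygen, zgen, Prod.ext_iff, nsmul_eq_mul]

lemma ygen_smul_zero (p : ℕ) : (p^4) • ygen p = 0 := by
  simp [ygen, Prod.ext_iff, nsmul_eq_mul]

lemma zgen_smul_zero (p : ℕ) : (p^2) • zgen p = 0 := by
  simp [zgen, Prod.ext_iff, nsmul_eq_mul]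

lemma ugen_mem (p l : ℕ) : ugen p ∈ Asub p l :=
  AddSubgroup.subset_closure (by simp)

lemma vgen_mem (p l : ℕ) : vgen p l ∈ Asub p l :=
  AddSubgroup.subset_closure (by simp)

lemma mem_Asub {p l : ℕ} {b : Bb p} :
    b ∈ Asub p l ↔ ∃ m n : ℤ, m • ugen p + n • vgen p l = b :=
  AddSubgroup.mem_closure_pair

/-- If `m • ugen p = 0` for `m : ℕ` then `p^4 ∣ m`. -/
lemma ugen_smul_eq_zero {p : ℕ} [Fact p.Prime] {m : ℕ} (h : m • ugen p = 0) : p^4 ∣ m := by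
  have h1 : m • ((p^2 : ℕ) : ZMod (p^6)) = 0 := by
    have h' := congrArg Prod.fst h
    rw [ugen_def'] at h'
    simpa using h'
  rw [nsmul_eq_mul, ← Nat.cast_mul, ZMod.natCast_eq_zero_iff] at h1
  have hp : p ≠ 0 := (Fact.out : p.Prime).ne_zero
  have : p^4 * p^2 ∣ m * p^2 := by rw [← pow_add]; exact h1
  exact (mul_dvd_mul_iff_right (pow_ne_zero 2 hp)).mp this

/-! ### The group structure: multiplication, center, commutators -/

section MGroup

variable {A : AddSubgroup B} {n : ℕ} [NeZero n] [BoundedSub A n]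

lemma mmul_def (x y : A × B × ZMod n) :
    x * y = (x.1 + y.1, x.2.1 + x.2.2.val • (y.1 : B) + y.2.1, x.2.2 + y.2.2) := rfl

lemma mone_def : (1 : A × B × ZMod n) = (0, 0, 0) := rfl

lemma minv_def (x : A × B × ZMod n) :
    x⁻¹ = (-x.1, -x.2.1 + x.2.2.val • (x.1 : B), -x.2.2) := rfl

/-- Elements of the form `(0, b, 0)` are central. -/
lemma central_of_form (b : B) (y : A × B × ZMod n) :
    ((0 : A), b, (0 : ZMod n)) * y = y * ((0 : A), b, (0 : ZMod n)) := by
  simp only [mmul_def, ZMod.val_zero, zero_smul, zero_add, add_zero, smul_zero,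
    ZeroMemClass.coe_zero]
  exact Prod.ext rfl (Prod.ext (add_comm _ _) rfl)

/-- Any commutator has the form `(0, c, 0)` with `c ∈ A`. -/
lemma comm_form (g h : A × B × ZMod n) :
    ∃ c : A, g * h * g⁻¹ * h⁻¹ = ((0 : A), (c : B), (0 : ZMod n)) := by
  have hb := BoundedSub.bound (A := A) (n := n)
  refine ⟨g.2.2.val • h.1 - h.2.2.val • g.1, ?_⟩
  refine Prod.ext (by simp [mmul_def, minv_def]) (Prod.ext ?_ (by simp [mmul_def, minv_def]))
  show g.2.1 + g.2.2.val • (h.1 : B) + h.2.1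
      + (g.2.2 + h.2.2).val • ((-g.1 : A) : B) + (-g.2.1 + g.2.2.val • (g.1 : B))
      + ((g.2.2 + h.2.2) + -g.2.2).val • ((-h.1 : A) : B)
      + (-h.2.1 + h.2.2.val • (h.1 : B))
      = ((g.2.2.val • h.1 - h.2.2.val • g.1 : A) : B)
  rw [add_neg_cancel_comm, ZMod.val_add, val_smul_eq _ (hb (-g.1)), add_nsmul]
  push_cast
  simp only [smul_neg]
  abel

end MGroup

/-! ### Center of `M_l` -/

section Center

variable (p l : ℕ) [Fact p.Prime]

lemma one_lt_p4 : 1 < p^4 :=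
  Nat.one_lt_pow (by norm_num) (Fact.out : p.Prime).one_lt

/-- A central element of `M_l` has the form `(0, b, 0)`. -/
lemma central_form {g : Asub p l × Bb p × ZMod (p^4)}
    (hg : ∀ y, g * y = y * g) : g.1 = 0 ∧ g.2.2 = 0 := by
  haveI : Fact (1 < p^4) := ⟨one_lt_p4 p⟩
  constructor
  · have h := congrArg (fun t => t.2.1) (hg ((0 : Asub p l), (0 : Bb p), (1 : ZMod (p^4))))
    simp only [mmul_def, ZeroMemClass.coe_zero, smul_zero, add_zero, zero_add,
      ZMod.val_one, one_smul] at h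
    exact Subtype.ext (by simpa using h.symm)
  · have h := congrArg (fun t => t.2.1)
      (hg ((⟨ugen p, ugen_mem p l⟩ : Asub p l), (0 : Bb p), (0 : ZMod (p^4))))
    simp only [mmul_def, ZeroMemClass.coe_zero, smul_zero, add_zero, zero_add,
      ZMod.val_zero, zero_smul] at h
    have h2 : g.2.2.val • ugen p = 0 := by
      have := add_left_cancel (h.trans (add_zero g.2.1).symm)
      exact this
    have h3 : p^4 ∣ g.2.2.val := ugen_smul_eq_zero h2
    exact (ZMod.val_eq_zero _).mp (Nat.eq_zero_of_dvd_of_lt h3 (ZMod.val_lt g.2.2))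

end Center

/-! ### Transporting an isomorphism `M_l ≃* M_{l'}` to an automorphism of `B` -/

section Transport

variable {p l l' : ℕ} [Fact p.Prime]

abbrev Mt (p l : ℕ) [Fact p.Prime] := Asub p l × Bb p × ZMod (p^4)

variable (Ψ : Mt p l ≃* Mt p l')

lemma psi_central (b : Bb p) (y : Mt p l') :
    Ψ ((0 : Asub p l), b, (0 : ZMod (p^4))) * y = y * Ψ ((0 : Asub p l), b, (0 : ZMod (p^4))) := by
  conv_lhs => rw [← Ψ.apply_symm_apply y, ← map_mul, central_of_form, map_mul,
    Ψ.apply_symm_apply]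

lemma psi_form (b : Bb p) :
    (Ψ ((0 : Asub p l), b, (0 : ZMod (p^4)))).1 = 0 ∧
    (Ψ ((0 : Asub p l), b, (0 : ZMod (p^4)))).2.2 = 0 :=
  central_form p l' (psi_central Ψ b)

/-- The induced additive map on `B`. -/
def phiHom : Bb p →+ Bb p :=
  AddMonoidHom.mk' (fun b => (Ψ ((0 : Asub p l), b, (0 : ZMod (p^4)))).2.1) (by
    intro b b'
    have hform := psi_form Ψ b'
    have key : ((0 : Asub p l), b + b', (0 : ZMod (p^4)))
        = ((0 : Asub p l), b, (0 : ZMod (p^4))) * ((0 : Asub p l), b', (0 : ZMod (p^4))) := by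
      simp [mmul_def]
    show (Ψ ((0 : Asub p l), b + b', (0 : ZMod (p^4)))).2.1
        = (Ψ ((0 : Asub p l), b, (0 : ZMod (p^4)))).2.1
          + (Ψ ((0 : Asub p l), b', (0 : ZMod (p^4)))).2.1
    rw [key, map_mul, mmul_def]
    simp [hform.1, (psi_form Ψ b).2])

lemma phiHom_eq (b : Bb p) :
    Ψ ((0 : Asub p l), b, (0 : ZMod (p^4)))
      = ((0 : Asub p l'), phiHom Ψ b, (0 : ZMod (p^4))) := by
  have h := psi_form Ψ b
  exact Prod.ext h.1 (Prod.ext rfl h.2)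

lemma phiHom_symm_cancel (b : Bb p) : phiHom Ψ (phiHom Ψ.symm b) = b := by
  have h := phiHom_eq Ψ.symm b
  have : Ψ ((0 : Asub p l), phiHom Ψ.symm b, (0 : ZMod (p^4)))
      = ((0 : Asub p l'), b, (0 : ZMod (p^4))) := by
    rw [← h, Ψ.apply_symm_apply]
  have h2 : phiHom Ψ (phiHom Ψ.symm b) = (Ψ ((0 : Asub p l), phiHom Ψ.symm b, (0 : ZMod (p^4)))).2.1 := rfl
  rw [h2, this]

/-- `φ` maps `A_l` into `A_{l'}`. -/
lemma phiHom_maps (a : Bb p) (ha : a ∈ Asub p l) : phiHom Ψ a ∈ Asub p l' := by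
  haveI : Fact (1 < p^4) := ⟨one_lt_p4 p⟩
  -- (0, a, 0) is a commutator in M_l
  set g : Mt p l := ((0 : Asub p l), (0 : Bb p), (1 : ZMod (p^4))) with hgdef
  set h : Mt p l := ((⟨a, ha⟩ : Asub p l), (0 : Bb p), (0 : ZMod (p^4))) with hhdef
  have hcomm : g * h * g⁻¹ * h⁻¹ = ((0 : Asub p l), a, (0 : ZMod (p^4))) := by
    refine Prod.ext ?_ (Prod.ext ?_ ?_) <;>
      simp [hgdef, hhdef, mmul_def, minv_def, ZMod.val_one, ZMod.val_zero]
  obtain ⟨c, hc⟩ := comm_form (Ψ g) (Ψ h)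
  have : Ψ ((0 : Asub p l), a, (0 : ZMod (p^4))) = ((0 : Asub p l'), (c : Bb p), (0 : ZMod (p^4))) := by
    rw [← hcomm, map_mul, map_mul, map_mul, map_inv, map_inv, hc]
  have h2 : phiHom Ψ a = (c : Bb p) := by
    have := congrArg (fun t => t.2.1) this
    simpa [phiHom] using this
  rw [h2]; exact c.2

end Transport

/-! ### The abelian stage: an automorphism of `B` carrying `A_l` into `A_{l'}` forces `l = l'` -/

lemma key_int (p : ℤ) (hp : Prime p) (l l' : ℤ)
    (a2 a3 b1 b2 b3 c1 c2 c3 m n m' n' w1 w2 w3 : ℤ)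
    (hb1 : p^6 ∣ p^4 * b1)
    (hc1 : p^6 ∣ p^2 * c1) (hc2 : p^4 ∣ p^2 * c2)
    (e2 : p^4 ∣ (m*p + n*p^2) - (p^2*a2 + p*b2 + c2))
    (e3 : p^2 ∣ (m + n*(p*l')) - (p^2*a3 + p*b3 + c3))
    (e5 : p^6 ∣ (m'*p^2) - (p^2*b1 + (p*l)*c1))
    (e6 : p^4 ∣ (m'*p + n'*p^2) - (p^2*b2 + (p*l)*c2))
    (e7 : p^2 ∣ (m' + n'*(p*l')) - (p^2*b3 + (p*l)*c3))
    (hw1 : p^6 ∣ p^2 * w1) (hw2 : p^4 ∣ p^2 * w2)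
    (hw : p^2 ∣ 1 - (w1*a3 + w2*b3 + w3*c3)) :
    p ∣ l' - l := by
  have hp0 : p ≠ 0 := hp.ne_zero
  have hp2 : (p^2 : ℤ) ≠ 0 := pow_ne_zero _ hp0
  have hp4 : (p^4 : ℤ) ≠ 0 := pow_ne_zero _ hp0
  obtain ⟨K1, hK1⟩ := hb1
  obtain ⟨K2, hK2⟩ := hc1
  obtain ⟨K3, hK3⟩ := hc2
  obtain ⟨K4, hK4⟩ := e2
  obtain ⟨K5, hK5⟩ := e3
  obtain ⟨K6, hK6⟩ := e5
  obtain ⟨K7, hK7⟩ := e6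
  obtain ⟨K8, hK8⟩ := e7
  obtain ⟨K10, hK10⟩ := hw1
  obtain ⟨K11, hK11⟩ := hw2
  obtain ⟨K9, hK9⟩ := hw
  have db1 : b1 = p^2 * K1 := mul_left_cancel₀ hp4 (by linear_combination hK1)
  have dc1 : c1 = p^4 * K2 := mul_left_cancel₀ hp2 (by linear_combination hK2)
  have dc2 : c2 = p^2 * K3 := mul_left_cancel₀ hp2 (by linear_combination hK3)
  have dw1 : w1 = p^4 * K10 := mul_left_cancel₀ hp2 (by linear_combination hK10)
  have dw2 : w2 = p^2 * K11 := mul_left_cancel₀ hp2 (by linear_combination hK11)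
  have de2 : m - b2 = p * (p^2*K4 + a2 + K3 - n) :=
    mul_left_cancel₀ hp0 (by linear_combination hK4 + dc2)
  have de3 : m - c3 = p * (p*K5 + p*a3 + b3 - n*l') := by linear_combination hK5
  have de5 : m' = p^2 * (p^2*K6 + K1 + p*l*K2) :=
    mul_left_cancel₀ hp2 (by linear_combination hK6 + p^2 * db1 + p*l*dc1)
  have de6 : n' - b2 = p * (p*K7 - (p^2*K6 + K1 + p*l*K2) + l*K3) :=
    mul_left_cancel₀ hp2 (by linear_combination hK7 - p*de5 + p*l*dc2)
  have de7 : n'*l' - l*c3 = p * (K8 + b3 - (p^2*K6 + K1 + p*l*K2)) :=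
    mul_left_cancel₀ hp0 (by linear_combination hK8 - de5)
  have h1 : p ∣ n' - c3 := by
    rw [show n' - c3 = (n' - b2) - (m - b2) + (m - c3) by ring]
    exact dvd_add (dvd_sub ⟨_, de6⟩ ⟨_, de2⟩) ⟨_, de3⟩
  have h2 : p ∣ c3 * (l' - l) := by
    rw [show c3*(l'-l) = -l'*(n'-c3) + (n'*l' - l*c3) by ring]
    exact dvd_add (Dvd.dvd.mul_left h1 _) ⟨_, de7⟩
  have h3 : ¬ p ∣ c3 := by
    rintro ⟨q, hq⟩
    exact hp.not_dvd_one ⟨p*K9 + p^3*K10*a3 + p*K11*b3 + w3*q,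
      by linear_combination hK9 + a3*dw1 + b3*dw2 + w3*hq⟩
  exact ((hp.dvd_mul).mp h2).resolve_left h3

lemma Bb_decomp (p : ℕ) [Fact p.Prime] (b : Bb p) :
    b = b.1.val • xgen p + b.2.1.val • ygen p + b.2.2.val • zgen p := by
  refine Prod.ext ?_ (Prod.ext ?_ ?_) <;>
    · simp only [Prod.fst_add, Prod.snd_add, Prod.smul_fst, Prod.smul_snd]
      simp only [xgen, ygen, zgen, smul_zero, add_zero, zero_add]
      exact ((ZMod.natCast_rightInverse _).symm.trans (by rw [nsmul_eq_mul, mul_one]))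

lemma int_dvd_of_zmod_eq {k : ℕ} [NeZero k] {e : ℤ} (h : ((e : ZMod k)) = 0) : (k:ℤ) ∣ e :=
  (ZMod.intCast_zmod_eq_zero_iff_dvd e k).mp h

lemma abelian_key (p l l' : ℕ) [Fact p.Prime] (hl : l < p) (hl' : l' < p)
    (φ : Bb p →+ Bb p)
    (hA : ∀ a : Bb p, a ∈ Asub p l → φ a ∈ Asub p l')
    (w : Bb p) (hw0 : (p^2) • w = 0) (hwz : φ w = zgen p) : l = l' := by
  have hp : p.Prime := Fact.out
  haveI : NeZero (p^2) := ⟨pow_ne_zero _ hp.ne_zero⟩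
  haveI : NeZero (p^4) := ⟨pow_ne_zero _ hp.ne_zero⟩
  haveI : NeZero (p^6) := ⟨pow_ne_zero _ hp.ne_zero⟩
  set α := φ (xgen p) with hαdef
  set β := φ (ygen p) with hβdef
  set γ := φ (zgen p) with hγdef
  -- integer values of all the coordinates
  set a2 : ℤ := (α.2.1.val : ℤ) with ha2def
  set a3 : ℤ := (α.2.2.val : ℤ) with ha3def
  set b1 : ℤ := (β.1.val : ℤ) with hb1def
  set b2 : ℤ := (β.2.1.val : ℤ) with hb2def
  set b3 : ℤ := (β.2.2.val : ℤ) with hb3def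
  set c1 : ℤ := (γ.1.val : ℤ) with hc1def
  set c2 : ℤ := (γ.2.1.val : ℤ) with hc2def
  set c3 : ℤ := (γ.2.2.val : ℤ) with hc3def
  set w1 : ℤ := (w.1.val : ℤ) with hw1def
  set w2 : ℤ := (w.2.1.val : ℤ) with hw2def
  set w3 : ℤ := (w.2.2.val : ℤ) with hw3def
  have ha2 : ((α.2.1.val : ℕ) : ZMod (p^4)) = α.2.1 := ZMod.natCast_rightInverse _
  have ha3 : ((α.2.2.val : ℕ) : ZMod (p^2)) = α.2.2 := ZMod.natCast_rightInverse _
  have hb1 : ((β.1.val : ℕ) : ZMod (p^6)) = β.1 := ZMod.natCast_rightInverse _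
  have hb2 : ((β.2.1.val : ℕ) : ZMod (p^4)) = β.2.1 := ZMod.natCast_rightInverse _
  have hb3 : ((β.2.2.val : ℕ) : ZMod (p^2)) = β.2.2 := ZMod.natCast_rightInverse _
  have hc1 : ((γ.1.val : ℕ) : ZMod (p^6)) = γ.1 := ZMod.natCast_rightInverse _
  have hc2 : ((γ.2.1.val : ℕ) : ZMod (p^4)) = γ.2.1 := ZMod.natCast_rightInverse _
  have hc3 : ((γ.2.2.val : ℕ) : ZMod (p^2)) = γ.2.2 := ZMod.natCast_rightInverse _
  have hw1 : ((w.1.val : ℕ) : ZMod (p^6)) = w.1 := ZMod.natCast_rightInverse _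
  have hw2 : ((w.2.1.val : ℕ) : ZMod (p^4)) = w.2.1 := ZMod.natCast_rightInverse _
  have hw3 : ((w.2.2.val : ℕ) : ZMod (p^2)) = w.2.2 := ZMod.natCast_rightInverse _
  -- images of the relations
  have hφu : φ (ugen p) = (p^2) • α + p • β + γ := by
    simp only [ugen, map_add, map_nsmul, hαdef, hβdef, hγdef]
  have hφv : φ (vgen p l) = (p^2) • β + (p*l) • γ := by
    simp only [vgen, map_add, map_nsmul, hβdef, hγdef]
  have hβ0 : (p^4) • β = 0 := by rw [hβdef, ← map_nsmul, ygen_smul_zero, map_zero]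
  have hγ0 : (p^2) • γ = 0 := by rw [hγdef, ← map_nsmul, zgen_smul_zero, map_zero]
  have hzeq : w.1.val • α + w.2.1.val • β + w.2.2.val • γ = zgen p := by
    rw [hαdef, hβdef, hγdef, ← map_nsmul, ← map_nsmul, ← map_nsmul, ← map_add, ← map_add,
      ← Bb_decomp, hwz]
  obtain ⟨m, n, hmn⟩ := mem_Asub.mp (hA _ (ugen_mem p l))
  obtain ⟨m', n', hmn'⟩ := mem_Asub.mp (hA _ (vgen_mem p l))
  rw [hφu] at hmn
  rw [hφv] at hmn'
  rw [ugen_def' p, vgen_def' p l'] at hmn hmn'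
  -- component equations
  have E2 := congrArg (fun t : Bb p => t.2.1) hmn
  have E3 := congrArg (fun t : Bb p => t.2.2) hmn
  have E5 := congrArg (fun t : Bb p => t.1) hmn'
  have E6 := congrArg (fun t : Bb p => t.2.1) hmn'
  have E7 := congrArg (fun t : Bb p => t.2.2) hmn'
  have F1 := congrArg (fun t : Bb p => t.1) hβ0
  have G1 := congrArg (fun t : Bb p => t.1) hγ0
  have G2 := congrArg (fun t : Bb p => t.2.1) hγ0
  have W1 := congrArg (fun t : Bb p => t.1) hw0
  have W2 := congrArg (fun t : Bb p => t.2.1) hw0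
  have Z3 := congrArg (fun t : Bb p => t.2.2) hzeq
  simp only [Prod.fst_add, Prod.snd_add, Prod.smul_fst, Prod.smul_snd, Prod.fst_zero,
    Prod.snd_zero, zgen]
    at E2 E3 E5 E6 E7 F1 G1 G2 W1 W2 Z3
  simp only [zsmul_eq_mul, nsmul_eq_mul, smul_zero, mul_zero, add_zero, zero_add]
    at E2 E3 E5 E6 E7 F1 G1 G2 W1 W2 Z3
  push_cast at E2 E3 E5 E6 E7 F1 G1 G2 W1 W2 Z3
  -- divisibilities
  have d_b1 : (p:ℤ)^6 ∣ (p:ℤ)^4 * b1 := by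
    have D : (((p:ℤ)^4 * b1 : ℤ) : ZMod (p^6)) = 0 := by
      push_cast [hb1, ha2def, ha3def, hb1def, hb2def, hb3def, hc1def, hc2def, hc3def, hw1def, hw2def, hw3def]
      linear_combination F1
    exact_mod_cast int_dvd_of_zmod_eq D
  have d_c1 : (p:ℤ)^6 ∣ (p:ℤ)^2 * c1 := by
    have D : (((p:ℤ)^2 * c1 : ℤ) : ZMod (p^6)) = 0 := by
      push_cast [hc1, ha2def, ha3def, hb1def, hb2def, hb3def, hc1def, hc2def, hc3def, hw1def, hw2def, hw3def]
      linear_combination G1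
    exact_mod_cast int_dvd_of_zmod_eq D
  have d_c2 : (p:ℤ)^4 ∣ (p:ℤ)^2 * c2 := by
    have D : (((p:ℤ)^2 * c2 : ℤ) : ZMod (p^4)) = 0 := by
      push_cast [hc2, ha2def, ha3def, hb1def, hb2def, hb3def, hc1def, hc2def, hc3def, hw1def, hw2def, hw3def]
      linear_combination G2
    exact_mod_cast int_dvd_of_zmod_eq D
  have d_w1 : (p:ℤ)^6 ∣ (p:ℤ)^2 * w1 := by
    have D : (((p:ℤ)^2 * w1 : ℤ) : ZMod (p^6)) = 0 := by
      push_cast [hw1, ha2def, ha3def, hb1def, hb2def, hb3def, hc1def, hc2def, hc3def, hw1def, hw2def, hw3def]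
      linear_combination W1
    exact_mod_cast int_dvd_of_zmod_eq D
  have d_w2 : (p:ℤ)^4 ∣ (p:ℤ)^2 * w2 := by
    have D : (((p:ℤ)^2 * w2 : ℤ) : ZMod (p^4)) = 0 := by
      push_cast [hw2, ha2def, ha3def, hb1def, hb2def, hb3def, hc1def, hc2def, hc3def, hw1def, hw2def, hw3def]
      linear_combination W2
    exact_mod_cast int_dvd_of_zmod_eq D
  have d_e2 : (p:ℤ)^4 ∣ (m*p + n*p^2) - ((p:ℤ)^2*a2 + p*b2 + c2) := by
    have D : ((((m*(p:ℤ) + n*(p:ℤ)^2) - ((p:ℤ)^2*a2 + p*b2 + c2) : ℤ)) : ZMod (p^4)) = 0 := by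
      push_cast [ha2, hb2, hc2, ha2def, ha3def, hb1def, hb2def, hb3def, hc1def, hc2def, hc3def, hw1def, hw2def, hw3def]
      linear_combination E2
    exact_mod_cast int_dvd_of_zmod_eq D
  have d_e3 : (p:ℤ)^2 ∣ (m + n*((p:ℤ)*l')) - ((p:ℤ)^2*a3 + p*b3 + c3) := by
    have D : ((((m + n*((p:ℤ)*l')) - ((p:ℤ)^2*a3 + p*b3 + c3) : ℤ)) : ZMod (p^2)) = 0 := by
      push_cast [ha3, hb3, hc3, ha2def, ha3def, hb1def, hb2def, hb3def, hc1def, hc2def, hc3def, hw1def, hw2def, hw3def]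
      linear_combination E3
    exact_mod_cast int_dvd_of_zmod_eq D
  have d_e5 : (p:ℤ)^6 ∣ (m'*(p:ℤ)^2) - ((p:ℤ)^2*b1 + ((p:ℤ)*l)*c1) := by
    have D : ((((m'*(p:ℤ)^2) - ((p:ℤ)^2*b1 + ((p:ℤ)*l)*c1) : ℤ)) : ZMod (p^6)) = 0 := by
      push_cast [hb1, hc1, ha2def, ha3def, hb1def, hb2def, hb3def, hc1def, hc2def, hc3def, hw1def, hw2def, hw3def]
      linear_combination E5
    exact_mod_cast int_dvd_of_zmod_eq D
  have d_e6 : (p:ℤ)^4 ∣ (m'*(p:ℤ) + n'*(p:ℤ)^2) - ((p:ℤ)^2*b2 + ((p:ℤ)*l)*c2) := by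
    have D : ((((m'*(p:ℤ) + n'*(p:ℤ)^2) - ((p:ℤ)^2*b2 + ((p:ℤ)*l)*c2) : ℤ)) : ZMod (p^4)) = 0 := by
      push_cast [hb2, hc2, ha2def, ha3def, hb1def, hb2def, hb3def, hc1def, hc2def, hc3def, hw1def, hw2def, hw3def]
      linear_combination E6
    exact_mod_cast int_dvd_of_zmod_eq D
  have d_e7 : (p:ℤ)^2 ∣ (m' + n'*((p:ℤ)*l')) - ((p:ℤ)^2*b3 + ((p:ℤ)*l)*c3) := by
    have D : ((((m' + n'*((p:ℤ)*l')) - ((p:ℤ)^2*b3 + ((p:ℤ)*l)*c3) : ℤ)) : ZMod (p^2)) = 0 := by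
      push_cast [hb3, hc3, ha2def, ha3def, hb1def, hb2def, hb3def, hc1def, hc2def, hc3def, hw1def, hw2def, hw3def]
      linear_combination E7
    exact_mod_cast int_dvd_of_zmod_eq D
  have d_w : (p:ℤ)^2 ∣ 1 - (w1*a3 + w2*b3 + w3*c3) := by
    have D : (((1 - (w1*a3 + w2*b3 + w3*c3) : ℤ)) : ZMod (p^2)) = 0 := by
      push_cast [ha3, hb3, hc3, ha2def, ha3def, hb1def, hb2def, hb3def, hc1def, hc2def, hc3def, hw1def, hw2def, hw3def]
      linear_combination -Z3
    exact_mod_cast int_dvd_of_zmod_eq D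
  have hfin : (p:ℤ) ∣ (l' : ℤ) - l :=
    key_int p (Nat.prime_iff_prime_int.mp hp) l l' a2 a3 b1 b2 b3 c1 c2 c3 m n m' n' w1 w2 w3
      d_b1 d_c1 d_c2 d_e2 d_e3 d_e5 d_e6 d_e7 d_w1 d_w2 d_w
  have : (l' : ℤ) - l = 0 := Int.eq_zero_of_abs_lt_dvd hfin (by
    rw [abs_sub_lt_iff]; omega)
  omega

/-! ### Cardinality of `A_l` -/

lemma zsmul_mod {b : B} {k : ℕ} [NeZero k] (h : k • b = 0) (m : ℤ) :
    ((m : ZMod k).val : ℕ) • b = m • b := by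
  have hv : (((m : ZMod k).val : ℤ)) = m % k := ZMod.val_intCast m
  calc ((m : ZMod k).val : ℕ) • b = (((m : ZMod k).val : ℤ)) • b := (natCast_zsmul _ _).symm
    _ = (m % k) • b := by rw [hv]
    _ = (m - k * (m / k)) • b := by rw [Int.emod_def]
    _ = m • b - (m / k) • ((k : ℤ) • b) := by
        rw [sub_zsmul, mul_comm, mul_zsmul]
        exact (sub_eq_add_neg _ _).symm
    _ = m • b := by rw [natCast_zsmul, h, smul_zero, sub_zero]

lemma vgen_smul_zero (p l : ℕ) : (p^2) • vgen p l = 0 := by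
  rw [vgen_def']
  refine Prod.ext ?_ (Prod.ext ?_ ?_) <;>
    simp only [Prod.smul_fst, Prod.smul_snd, Prod.fst_zero, Prod.snd_zero, smul_zero]
  · rw [nsmul_eq_mul, ← Nat.cast_mul, ZMod.natCast_eq_zero_iff]
    exact ⟨1, by ring⟩
  · rw [nsmul_eq_mul, ← Nat.cast_mul, ZMod.natCast_eq_zero_iff]
    exact ⟨p*l, by ring⟩

lemma ugen_smul_zero' (p l : ℕ) [Fact p.Prime] : (p^4) • ugen p = 0 :=
  BoundedSub.bound (A := Asub p l) (n := p^4) ⟨ugen p, ugen_mem p l⟩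

def Apair (p l : ℕ) : ZMod (p^4) × ZMod (p^2) → Asub p l := fun mn =>
  ⟨mn.1.val • ugen p + mn.2.val • vgen p l,
    add_mem (nsmul_mem (ugen_mem p l) _) (nsmul_mem (vgen_mem p l) _)⟩

lemma Apair_bijective (p l : ℕ) [Fact p.Prime] : Function.Bijective (Apair p l) := by
  have hp : p.Prime := Fact.out
  constructor
  · rintro ⟨m, n⟩ ⟨m', n'⟩ h
    have h' : m.val • ugen p + n.val • vgen p l = m'.val • ugen p + n'.val • vgen p l :=
      congrArg Subtype.val h
    -- first components
    have h1 := congrArg (fun t : Bb p => t.1) h'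
    rw [ugen_def', vgen_def'] at h1
    simp only [Prod.fst_add, Prod.smul_fst, smul_zero, add_zero] at h1
    rw [nsmul_eq_mul, nsmul_eq_mul, ← Nat.cast_mul, ← Nat.cast_mul] at h1
    have hm : m = m' := by
      have hmod := (ZMod.natCast_eq_natCast_iff _ _ _).mp h1
      have hmod2 : m.val ≡ m'.val [MOD p^4] := by
        refine Nat.ModEq.mul_right_cancel' (pow_ne_zero 2 hp.ne_zero) ?_
        rw [← pow_add]
        exact hmod
      apply ZMod.val_injective
      have := hmod2
      unfold Nat.ModEq at this
      rwa [Nat.mod_eq_of_lt (ZMod.val_lt m), Nat.mod_eq_of_lt (ZMod.val_lt m')] at this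
    subst hm
    have h2' : n.val • vgen p l = n'.val • vgen p l := by
      have := add_left_cancel h'
      exact this
    have h2 := congrArg (fun t : Bb p => t.2.1) h2'
    rw [vgen_def'] at h2
    simp only [Prod.snd_add, Prod.smul_snd, Prod.smul_fst] at h2
    rw [nsmul_eq_mul, nsmul_eq_mul, ← Nat.cast_mul, ← Nat.cast_mul] at h2
    have hn : n = n' := by
      have hmod := (ZMod.natCast_eq_natCast_iff _ _ _).mp h2
      have hmod2 : n.val ≡ n'.val [MOD p^2] := by
        refine Nat.ModEq.mul_right_cancel' (pow_ne_zero 2 hp.ne_zero) ?_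
        rw [← pow_add]
        exact hmod
      apply ZMod.val_injective
      have := hmod2
      unfold Nat.ModEq at this
      rwa [Nat.mod_eq_of_lt (ZMod.val_lt n), Nat.mod_eq_of_lt (ZMod.val_lt n')] at this
    rw [hn]
  · rintro ⟨b, hb⟩
    obtain ⟨m, n, hmn⟩ := mem_Asub.mp hb
    haveI : NeZero (p^2) := ⟨pow_ne_zero _ hp.ne_zero⟩
    haveI : NeZero (p^4) := ⟨pow_ne_zero _ hp.ne_zero⟩
    refine ⟨((m : ZMod (p^4)), (n : ZMod (p^2))), ?_⟩
    apply Subtype.ext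
    show ((m : ZMod (p^4)).val) • ugen p + ((n : ZMod (p^2)).val) • vgen p l = b
    rw [zsmul_mod (ugen_smul_zero' p l) m, zsmul_mod (vgen_smul_zero p l) n, hmn]

lemma card_Asub (p l : ℕ) [Fact p.Prime] : Nat.card (Asub p l) = p^6 := by
  have hp : p.Prime := Fact.out
  haveI : NeZero p := ⟨hp.ne_zero⟩
  rw [← Nat.card_eq_of_bijective _ (Apair_bijective p l), Nat.card_prod,
    Nat.card_zmod, Nat.card_zmod, ← pow_add]

lemma card_Mt (p l : ℕ) [Fact p.Prime] :
    Nat.card (Asub p l × Bb p × ZMod (p^4)) = p^22 := by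
  have hp : p.Prime := Fact.out
  haveI : NeZero p := ⟨hp.ne_zero⟩
  simp only [Nat.card_prod, Nat.card_zmod, card_Asub]
  ring

/-! ### `M` is metabelian: commutator subgroup inside the center -/

lemma comm_le_center (p l : ℕ) [Fact p.Prime] :
    commutator (Asub p l × Bb p × ZMod (p^4)) ≤
      Subgroup.center (Asub p l × Bb p × ZMod (p^4)) := by
  rw [commutator_def, Subgroup.commutator_le]
  intro g _ h _
  obtain ⟨c, hc⟩ := comm_form g h
  rw [Subgroup.mem_center_iff]
  intro y
  show y * (g * h * g⁻¹ * h⁻¹) = (g * h * g⁻¹ * h⁻¹) * y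
  rw [hc]
  exact (central_of_form _ _).symm

/-- From an isomorphism `M_l ≃* M_{l'}` conclude `l = l'`. -/
lemma iso_eq (p l l' : ℕ) [Fact p.Prime] (hl : l < p) (hl' : l' < p)
    (Ψ : Mt p l ≃* Mt p l') : l = l' := by
  refine abelian_key p l l' hl hl' (phiHom Ψ) (fun a ha => phiHom_maps Ψ a ha)
    (phiHom Ψ.symm (zgen p)) ?_ (phiHom_symm_cancel Ψ _)
  rw [← map_nsmul, zgen_smul_zero, map_zero]

/-- The groups `M_λ = G(A_λ ⊆ B)`, `λ = 0,…,p-1`, are pairwise nonisomorphic.  Hence the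
number of isomorphism classes of metabelian groups of order `p²²` is at least `p`: there is
a family of `p` pairwise nonisomorphic metabelian groups of order `p²²`. -/
theorem birkhoff_theorem (p : ℕ) [Fact p.Prime] :
    (∀ l l' : ℕ, l < p → l' < p →
        Nonempty ((Asub p l × Bb p × ZMod (p ^ 4)) ≃* (Asub p l' × Bb p × ZMod (p ^ 4))) →
        l = l') ∧
    ∃ G : Fin p → Type, ∃ _ : ∀ i, Group (G i),
      (∀ i, Nat.card (G i) = p ^ 22) ∧
      (∀ i, commutator (G i) ≤ Subgroup.center (G i)) ∧
      (∀ i j, i ≠ j → IsEmpty (G i ≃* G j)) := by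
  have part1 : ∀ l l' : ℕ, l < p → l' < p →
      Nonempty ((Asub p l × Bb p × ZMod (p ^ 4)) ≃* (Asub p l' × Bb p × ZMod (p ^ 4))) →
      l = l' := by
    rintro l l' hl hl' ⟨Ψ⟩
    exact iso_eq p l l' hl hl' Ψ
  refine ⟨part1, fun i => Asub p (i : ℕ) × Bb p × ZMod (p^4), fun i => mgroup _ _, ?_, ?_, ?_⟩
  · intro i; exact card_Mt p i
  · intro i; exact comm_le_center p i
  · intro i j hij
    exact ⟨fun Ψ => hij (Fin.ext (part1 i j i.2 j.2 ⟨Ψ⟩))⟩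
end Metabelian
end

section
/- If B has exponent p^n and A ≤ B has exponent p^m, then the group G(A ⊆ B) has exponent p^max(n,m) when p is odd, and the exponent of its commutator subgroup equals p^m. -/
namespace Metabelian

variable {B : Type*} [AddCommGroup B]

section Aux

variable (A : AddSubgroup B) (N : ℕ) [NeZero N] [BoundedSub A N]

lemma mul_def' (x y : A × B × ZMod N) :
    x * y = (x.1 + y.1, x.2.1 + x.2.2.val • (y.1 : B) + y.2.1, x.2.2 + y.2.2) := rfl

lemma one_def' : (1 : A × B × ZMod N) = (0, 0, 0) := rfl

lemma inv_def' (x : A × B × ZMod N) :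
    x⁻¹ = (-x.1, -x.2.1 + x.2.2.val • (x.1 : B), -x.2.2) := rfl

lemma smul_val_eq (k : ℕ) (d : ZMod N) (a : A) :
    (k • d).val • (a : B) = (k * d.val) • (a : B) := by
  have hb := BoundedSub.bound (A := A) (n := N) a
  have h : (k • d) = ((k * d.val : ℕ) : ZMod N) := by
    push_cast
    rw [ZMod.natCast_val, ZMod.cast_id, nsmul_eq_mul]
  rw [h, ZMod.val_natCast, val_smul_eq _ hb]

lemma pow_def' (x : A × B × ZMod N) (k : ℕ) :
    x ^ k = (k • x.1, k • x.2.1 + (Nat.choose k 2 * x.2.2.val) • (x.1 : B), k • x.2.2) := by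
  induction k with
  | zero => simp [one_def']
  | succ k ih =>
    rw [pow_succ, ih, mul_def']
    refine Prod.ext ?_ (Prod.ext ?_ ?_)
    · simp [succ_nsmul]
    · show k • x.2.1 + (Nat.choose k 2 * x.2.2.val) • (x.1 : B) + (k • x.2.2).val • (x.1 : B)
          + x.2.1 = (k + 1) • x.2.1 + (Nat.choose (k+1) 2 * x.2.2.val) • (x.1 : B)
      have hc : Nat.choose (k+1) 2 = Nat.choose k 2 + k := by
        rw [Nat.choose_succ_succ, Nat.choose_one_right, Nat.add_comm]
      rw [smul_val_eq, hc, Nat.add_mul, succ_nsmul, add_nsmul]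
      abel
    · show k • x.2.2 + x.2.2 = (k + 1) • x.2.2
      rw [succ_nsmul]

end Aux

lemma odd_pow_choose_two_dvd (q : ℕ) (hq : Odd q) : q ∣ Nat.choose q 2 := by
  rw [Nat.choose_two_right]
  obtain ⟨c, hc⟩ : 2 ∣ q - 1 := by
    rcases hq with ⟨t, ht⟩
    exact ⟨t, by omega⟩
  rw [Nat.mul_div_assoc q ⟨c, hc⟩]
  exact Dvd.intro _ rfl

open scoped commutatorElement

/-- If `B` has exponent `p^n` and `A ≤ B` has exponent `p^m`, then for odd `p` the group
`G(A ⊆ B)` has exponent `p^max(n,m)`, and the exponent of its commutator subgroup is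
`p^m`. -/
theorem exponent_of_construction (p n m : ℕ) [Fact p.Prime] (hodd : Odd p) {B : Type*}
    [AddCommGroup B] [Finite B] (hpB : ∀ b : B, ∃ k : ℕ, p ^ k • b = 0)
    (A : AddSubgroup B) [BoundedSub A (p ^ m)]
    (hexpB : AddMonoid.exponent B = p ^ n) (hexpA : AddMonoid.exponent A = p ^ m) :
    Monoid.exponent (A × B × ZMod (p ^ m)) = p ^ max n m ∧
    Monoid.exponent (commutator (A × B × ZMod (p ^ m))) = p ^ m := by
  set G := A × B × ZMod (p ^ m) with hG
  have hbound := BoundedSub.bound (A := A) (n := p ^ m)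
  -- p^m • anything in A is zero (as element of B)
  have hA0 : ∀ b : B, b ∈ A → p ^ m • b = 0 := fun b hb => hbound ⟨b, hb⟩
  have hB0 : ∀ b : B, p ^ n • b = 0 := by
    intro b
    rw [← hexpB]
    exact AddMonoid.exponent_nsmul_eq_zero b
  -- divisibility kills smuls
  have kill : ∀ (k l : ℕ) (b : B), l • b = 0 → l ∣ k → k • b = 0 := by
    intro k l b h hd
    obtain ⟨c, rfl⟩ := hd
    rw [mul_nsmul, h, smul_zero]
  -- p^m divides choose (p^l) 2 whenever m ≤ l
  have hch : ∀ l : ℕ, m ≤ l → ∀ (v : ℕ) (a : A), (Nat.choose (p ^ l) 2 * v) • (a : B) = 0 := by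
    intro l hl v a
    have h1 : p ^ m ∣ Nat.choose (p ^ l) 2 :=
      dvd_trans (pow_dvd_pow p hl) (odd_pow_choose_two_dvd _ (hodd.pow))
    refine kill _ _ _ (hbound a) (dvd_trans h1 (Dvd.intro _ rfl))
  -- elements of the big group killed by p ^ max n m
  have key : ∀ (x : G), x ^ (p ^ max n m) = 1 := by
    intro x
    rw [pow_def', one_def']
    refine Prod.ext ?_ (Prod.ext ?_ ?_)
    · have : (p ^ max n m) • (x.1 : B) = 0 :=
        kill _ _ _ (hbound x.1) (pow_dvd_pow p (le_max_right n m))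
      exact Subtype.ext (by simpa using this)
    · show (p ^ max n m) • x.2.1 + (Nat.choose (p ^ max n m) 2 * x.2.2.val) • (x.1 : B) = 0
      rw [kill _ _ _ (hB0 x.2.1) (pow_dvd_pow p (le_max_left n m)),
        hch _ (le_max_right n m), add_zero]
    · show (p ^ max n m) • x.2.2 = 0
      have : ((p ^ max n m : ℕ) : ZMod (p ^ m)) = 0 :=
        (ZMod.natCast_eq_zero_iff _ _).mpr (pow_dvd_pow p (le_max_right n m))
      rw [nsmul_eq_mul, this, zero_mul]
  have hdvd1 : Monoid.exponent G ∣ p ^ max n m :=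
    Monoid.exponent_dvd_of_forall_pow_eq_one key
  -- lower bounds
  have hEB : p ^ n ∣ Monoid.exponent G := by
    rw [← hexpB]
    refine AddMonoid.exponent_dvd_of_forall_nsmul_eq_zero fun b => ?_
    have h := Monoid.pow_exponent_eq_one (G := G) (0, b, 0)
    rw [pow_def', one_def'] at h
    have h2 := congrArg (fun z => z.2.1) h
    simpa using h2
  have hEm : p ^ m ∣ Monoid.exponent G := by
    have h := Monoid.pow_exponent_eq_one (G := G) (0, 0, 1)
    rw [pow_def', one_def'] at h
    have h2 := congrArg (fun z => z.2.2) h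
    simp only [nsmul_eq_mul, mul_one] at h2
    exact (ZMod.natCast_eq_zero_iff _ _).mp h2
  have hexpG : Monoid.exponent G = p ^ max n m := by
    refine Nat.dvd_antisymm hdvd1 ?_
    rcases le_total n m with h | h
    · rw [max_eq_right h]; exact hEm
    · rw [max_eq_left h]; exact hEB
  refine ⟨hexpG, ?_⟩
  -- the commutator subgroup
  set H : Subgroup G := {
    carrier := {x : G | x.2.1 ∈ A}
    mul_mem' := by
      intro x y hx hy
      show (x * y).2.1 ∈ A
      rw [mul_def']
      exact A.add_mem (A.add_mem hx (A.nsmul_mem y.1.2 _)) hy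
    one_mem' := A.zero_mem
    inv_mem' := by
      intro x hx
      show x⁻¹.2.1 ∈ A
      rw [inv_def']
      exact A.add_mem (A.neg_mem hx) (A.nsmul_mem x.1.2 _) } with hH
  have hcomm : commutator G ≤ H := by
    rw [commutator_def]
    rw [Subgroup.commutator_le]
    intro g _ h _
    show (⁅g, h⁆).2.1 ∈ A
    rw [commutatorElement_def, mul_def', mul_def', mul_def', inv_def', inv_def']
    show (g.2.1 + g.2.2.val • (h.1 : B) + h.2.1
        + (g.2.2 + h.2.2).val • ((-g.1 : A) : B) + (-g.2.1 + g.2.2.val • (g.1 : B)))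
        + (g.2.2 + h.2.2 + -g.2.2).val • ((-h.1 : A) : B)
        + (-h.2.1 + h.2.2.val • (h.1 : B)) ∈ A
    have : (g.2.1 + g.2.2.val • (h.1 : B) + h.2.1
        + (g.2.2 + h.2.2).val • ((-g.1 : A) : B) + (-g.2.1 + g.2.2.val • (g.1 : B)))
        + (g.2.2 + h.2.2 + -g.2.2).val • ((-h.1 : A) : B)
        + (-h.2.1 + h.2.2.val • (h.1 : B))
        = g.2.2.val • (h.1 : B) + (g.2.2 + h.2.2).val • ((-g.1 : A) : B)
          + g.2.2.val • (g.1 : B) + (g.2.2 + h.2.2 + -g.2.2).val • ((-h.1 : A) : B)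
          + h.2.2.val • (h.1 : B) := by abel
    rw [this]
    refine A.add_mem (A.add_mem (A.add_mem (A.add_mem ?_ ?_) ?_) ?_) ?_ <;>
      exact A.nsmul_mem (by simp) _
  -- exponent of commutator divides p^m
  have hdvd2 : Monoid.exponent (commutator G) ∣ p ^ m := by
    refine Monoid.exponent_dvd_of_forall_pow_eq_one fun g => ?_
    have hg : (g : G).2.1 ∈ A := hcomm g.2
    have : ((g : G)) ^ (p ^ m) = 1 := by
      rw [pow_def', one_def']
      refine Prod.ext ?_ (Prod.ext ?_ ?_)
      · exact Subtype.ext (by simpa using hbound (g : G).1)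
      · show (p ^ m) • (g : G).2.1 + (Nat.choose (p ^ m) 2 * (g:G).2.2.val) • ((g:G).1 : B) = 0
        rw [hA0 _ hg, hch m le_rfl, add_zero]
      · show (p ^ m) • (g : G).2.2 = 0
        rw [nsmul_eq_mul]
        simp
    exact Subtype.ext (by rw [SubmonoidClass.coe_pow, this]; rfl)
  -- p^m divides exponent of commutator
  have hdvd3 : p ^ m ∣ Monoid.exponent (commutator G) := by
    have h5 : AddMonoid.exponent A ∣ Monoid.exponent (commutator G) := by
      refine AddMonoid.exponent_dvd_of_forall_nsmul_eq_zero fun a => ?_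
      -- the commutator ⁅(a,0,0),(0,0,1)⁆ = (0, -(1.val • a), 0)
      set x : G := (a, 0, 0) with hx
      set y : G := (0, 0, 1) with hy
      have hmem : ⁅x, y⁆ ∈ commutator G :=
        Subgroup.commutator_mem_commutator (Subgroup.mem_top x) (Subgroup.mem_top y)
      have hval : ⁅x, y⁆ = ((0 : A), -((1 : ZMod (p ^ m)).val • (a : B)), (0 : ZMod (p ^ m))) := by
        rw [commutatorElement_def, mul_def', mul_def', mul_def', inv_def', inv_def']
        refine Prod.ext (by simp [hx, hy]) (Prod.ext ?_ (by simp [hx, hy]))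
        show ((0:B) + (0 : ZMod (p^m)).val • ((0:A) : B) + 0
            + ((0 : ZMod (p^m)) + 1).val • ((-a : A) : B) + (-(0:B) + (0:ZMod (p^m)).val • (a : B)))
            + ((0:ZMod (p^m)) + 1 + -(0:ZMod (p^m))).val • ((-(0:A) : A) : B)
            + (-(0:B) + (1 : ZMod (p^m)).val • ((0:A) : B))
            = -((1 : ZMod (p ^ m)).val • (a : B))
        simp
      have hpow := Monoid.pow_exponent_eq_one (⟨⁅x, y⁆, hmem⟩ : commutator G)
      have hpow2 : (⁅x, y⁆ : G) ^ Monoid.exponent (commutator G) = 1 := by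
        have := congrArg (Subtype.val) hpow
        rwa [SubmonoidClass.coe_pow] at this
      rw [hval, pow_def', one_def'] at hpow2
      have h2 := congrArg (fun z => z.2.1) hpow2
      simp only at h2
      have h3 : Monoid.exponent (commutator G) • ((1 : ZMod (p ^ m)).val • (a : B)) = 0 := by
        have := congrArg Neg.neg h2
        simpa [smul_neg] using h2
      have h4 : (1 : ZMod (p ^ m)).val • (a : B) = (a : B) := by
        have : (1 : ZMod (p ^ m)) = ((1 : ℕ) : ZMod (p ^ m)) := by norm_cast
        rw [this, ZMod.val_natCast, val_smul_eq _ (hbound a), one_nsmul]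
      rw [h4] at h3
      exact Subtype.ext (by simpa using h3)
    rwa [hexpA] at h5
  exact Nat.dvd_antisymm hdvd2 hdvd3

end Metabelian
end
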